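/- Let k be a field (or replace k-vector spaces by modules over an arbitrary ring). Assume the data of a bounded-below commuting double complex with rows 0,…,n equipped with row contractions for rows 0,…,n−1, and the morphisms t i j k defined from them. Then for all i, j, k with 1 ≤ k ≤ i ≤ n and j ≥ 0: ∂ (i−k) (j+k) ∘ t i j k − κ (i−k+1) (j+k−1) ∘ t i j (k−1) = (−1)^k · t i (j−1) k ∘ ∂ i j, as maps X i j → X (i−k) (j+k−1) (for j = 0 the right-hand side is 0 since ∂ i 0 = 0). -/

import Mathlib

/-!
STATEMENT 3: for all `1 ≤ k ≤ i ≤ n` and `j ≥ 0`,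
`∂ (i−k) (j+k) ∘ t i j k − κ (i−k+1) (j+k−1) ∘ t i j (k−1) = (−1)^k · t i (j−1) k ∘ ∂ i j`
as maps `X i j → X (i−k) (j+k−1)` (for `j = 0` the right-hand side is `0` since
`∂ i 0 = 0`; the two cases `j ≥ 1` and `j = 0` are stated separately, writing `k = kk+1`).

Setup (cf. the paper's double complex `Ω_• F_•`): a bounded-below commuting double
complex with rows `0,…,n` of modules over an arbitrary ring `R` (in particular,
`k`-vector spaces), with vertical differentials `∂`, horizontal differentials `κ`,
row contractions `s` for rows `0,…,n−1`, and the morphisms `t i j k` defined from them.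
Indices are natural numbers, with truncated subtraction encoding the vanishing of the
complex in negative degrees; `lcast` transports a linear map along (propositional)
equalities of indices and is an identity map.
-/

section
variable {R : Type} [Ring R] {X : ℕ → ℕ → Type}
  [∀ i j, AddCommGroup (X i j)] [∀ i j, Module R (X i j)]

/-- Transport a linear map along equalities of grading indices (an identity map). -/
def lcast {i j : ℕ} (i' j' : ℕ) (h : i = i') (h' : j = j') : X i j →ₗ[R] X i' j' := by
  subst h; subst h'; exact LinearMap.id

lemma kk_zero (κ : ∀ i j, X i j →ₗ[R] X (i-1) j)
    (hκκ : ∀ i j, (κ i j).comp (κ (i+1) j) = 0)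
    (a i j : ℕ) (h : i = a + 1) (w : X i j) :
    κ a j (lcast (R := R) a j (show i - 1 = a by omega) rfl (κ i j w)) = 0 := by
  subst h
  exact LinearMap.congr_fun (hκκ a j) w

lemma sk_lcast (s : ∀ i j, X i j →ₗ[R] X i (j+1)) (κ : ∀ i j, X i j →ₗ[R] X (i-1) j)
    (a : ℕ) {j : ℕ} (b : ℕ) (h' : j = b) (w : X a j) :
    s (a-1) b (κ a b (lcast (R := R) a b rfl h' w))
      = lcast (R := R) (a-1) (b+1) rfl (congrArg (· + 1) h') (s (a-1) j (κ a j w)) := by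
  subst h'; rfl

end

theorem statement3 (R : Type) [Ring R] (n : ℕ) (hn : 1 ≤ n)
    (X : ℕ → ℕ → Type) [∀ i j, AddCommGroup (X i j)] [∀ i j, Module R (X i j)]
    -- rows of the double complex are `0,…,n`: `X i j = 0` for `i > n` (and the indexing
    -- by `ℕ` encodes `X i j = 0` for `j < 0`, using truncated subtraction on indices)
    (hbd : ∀ i j, n < i → Subsingleton (X i j))
    -- vertical differentials `∂ i j : X i j → X i (j−1)` and horizontal differentials
    -- `κ i j : X i j → X (i−1) j`, with `∂ i 0 = 0` and `κ 0 j = 0`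
    (d : ∀ i j, X i j →ₗ[R] X i (j - 1))
    (κ : ∀ i j, X i j →ₗ[R] X (i - 1) j)
    (hd0 : ∀ i, d i 0 = 0) (hκ0 : ∀ j, κ 0 j = 0)
    (hdd : ∀ i j, (d i j).comp (d i (j + 1)) = 0)
    (hκκ : ∀ i j, (κ i j).comp (κ (i + 1) j) = 0)
    -- the commutation relation `κ i (j−1) ∘ ∂ i j = ∂ (i−1) j ∘ κ i j` (stated at source
    -- degree `j+1`; at `j = 0` it holds trivially since `∂ i 0 = 0`)
    (hcomm : ∀ i j, (κ i j).comp (d i (j + 1)) = (d (i - 1) (j + 1)).comp (κ i (j + 1)))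
    -- row contractions for rows `0,…,n−1`:
    -- `∂ i (j+1) ∘ s i j + s i (j−1) ∘ ∂ i j = id` (with `s i (−1) := 0`)
    (s : ∀ i j, X i j →ₗ[R] X i (j + 1))
    (hs0 : ∀ i, i < n → (d i 1).comp (s i 0) = LinearMap.id)
    (hs : ∀ i, i < n → ∀ j,
      (lcast (i) (j+1) rfl (by omega)).comp ((d i (j + 2)).comp (s i (j + 1)))
        + (s i j).comp (d i (j + 1)) = LinearMap.id)
    -- the morphisms `t i j k : X i j → X (i−k) (j+k)` for `k ≤ i`, defined recursively by
    -- `t i j 0 = id` and `t i j (k+1) = s (i−k−1) (j+k) ∘ κ (i−k) (j+k) ∘ t i j k`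
    (t : ∀ i j kk, X i j →ₗ[R] X (i - kk) (j + kk))
    (ht0 : ∀ i j, t i j 0 = LinearMap.id)
    (htsucc : ∀ i j kk, kk + 1 ≤ i →
      t i j (kk + 1) = (s (i - (kk + 1)) (j + kk)).comp ((κ (i - kk) (j + kk)).comp (t i j kk)))
 :
    (∀ i j kk, kk + 1 ≤ i → i ≤ n →
      -- `∂ (i−k) (j+k) ∘ t i j k − κ (i−k+1) (j+k−1) ∘ t i j (k−1) = (−1)^k • t i (j−1) k ∘ ∂ i j`
      -- (here with `k = kk+1 ≥ 1` and at `j+1`, i.e. `j ≥ 1`)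
      (lcast (i - (kk + 1)) (j + 1 + kk) rfl (by omega)).comp
          ((d (i - (kk + 1)) (j + 1 + (kk + 1))).comp
            ((lcast (i - (kk + 1)) (j + 1 + (kk + 1)) (by omega) rfl).comp (t i (j + 1) (kk + 1))))
        - (lcast (i - (kk + 1)) (j + 1 + kk) (by omega) rfl).comp
            ((κ (i - kk) (j + 1 + kk)).comp (t i (j + 1) kk))
      = ((-1 : ℤ) ^ (kk + 1)) •
          ((lcast (i - (kk + 1)) (j + 1 + kk) rfl (by omega)).comp
            ((t i j (kk + 1)).comp (d i (j + 1))))) ∧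
    (∀ i kk, kk + 1 ≤ i → i ≤ n →
      -- the case `j = 0`: the right-hand side is `0` since `∂ i 0 = 0`
      (lcast (i - (kk + 1)) (0 + kk) rfl (by omega)).comp
          ((d (i - (kk + 1)) (0 + (kk + 1))).comp
            ((lcast (i - (kk + 1)) (0 + (kk + 1)) (by omega) rfl).comp (t i 0 (kk + 1))))
        - (lcast (i - (kk + 1)) (0 + kk) (by omega) rfl).comp
            ((κ (i - kk) (0 + kk)).comp (t i 0 kk)) = 0) := by
  have key1 : ∀ kk i j, kk + 1 ≤ i → i ≤ n →
      (lcast (i - (kk + 1)) (j + 1 + kk) rfl (by omega)).comp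
          ((d (i - (kk + 1)) (j + 1 + (kk + 1))).comp
            ((lcast (i - (kk + 1)) (j + 1 + (kk + 1)) (by omega) rfl).comp (t i (j + 1) (kk + 1))))
        - (lcast (i - (kk + 1)) (j + 1 + kk) (by omega) rfl).comp
            ((κ (i - kk) (j + 1 + kk)).comp (t i (j + 1) kk))
      = ((-1 : ℤ) ^ (kk + 1)) •
          ((lcast (i - (kk + 1)) (j + 1 + kk) rfl (by omega)).comp
            ((t i j (kk + 1)).comp (d i (j + 1)))) := by
    intro kk
    induction kk with
    | zero =>
      intro i j h1 h2
      refine LinearMap.ext fun x => ?_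
      have hj : j + (0+1) = j + 1 + 0 := by omega
      show lcast (R := R) (i-(0+1)) (j+1+0) rfl rfl (d (i-(0+1)) (j+1+0+1) (t i (j+1) (0+1) x))
          - lcast (R := R) (i-(0+1)) (j+1+0) rfl rfl (κ (i-0) (j+1+0) (t i (j+1) 0 x))
        = ((-1 : ℤ)^(1:ℕ)) • lcast (R := R) (i-(0+1)) (j+1+0) rfl hj (t i j (0+1) (d i (j+1) x))
      have E : t i (j+1) (0+1) x = s (i-(0+1)) (j+1+0) (κ (i-0) (j+1+0) x) := by
        have h := LinearMap.congr_fun (htsucc i (j+1) 0 h1) x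
        rw [ht0] at h
        exact h
      have E' : t i j (0+1) (d i (j+1) x)
          = s (i-(0+1)) (j+0) (κ (i-0) (j+0) (d i (j+1) x)) := by
        have h := LinearMap.congr_fun (htsucc i j 0 h1) (d i (j+1) x)
        rw [ht0] at h
        exact h
      have e0 : t i (j+1) 0 x = x := LinearMap.congr_fun (ht0 i (j+1)) x
      rw [E, E', e0]
      have Hm : ∀ z : X (i-(0+1)) (j+1+0),
          lcast (R := R) (i-(0+1)) (j+1+0) rfl rfl
              (d (i-(0+1)) (j+1+0+1) (s (i-(0+1)) (j+1+0) z))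
            = z - lcast (R := R) (i-(0+1)) (j+1+0) rfl rfl
                (s (i-(0+1)) j (d (i-(0+1)) (j+1) z)) := by
        intro z
        have H := LinearMap.congr_fun (hs (i-(0+1)) (by omega) j) z
        simp only [LinearMap.add_apply, LinearMap.comp_apply, LinearMap.id_apply] at H
        exact eq_sub_of_add_eq H
      rw [Hm]
      have Hy : lcast (R := R) (i-(0+1)) (j+1+0) rfl rfl (κ (i-0) (j+1+0) x)
          = κ (i-0) (j+1+0) x := rfl
      rw [Hy]
      have Hc : κ (i-0) (j+0) (d i (j+1) x) = d (i-(0+1)) (j+1) (κ (i-0) (j+1+0) x) := by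
        have h := LinearMap.congr_fun (hcomm i j) x
        simp only [LinearMap.comp_apply] at h
        exact h
      rw [← Hc]
      show lcast (R := R) (i-(0+1)) (j+1+0) rfl rfl (κ (i-0) (j+1+0) x)
            - lcast (R := R) (i-(0+1)) (j+1+0) rfl rfl
                (s (i-(0+1)) j (κ (i-0) (j+0) (d i (j+1) x)))
            - lcast (R := R) (i-(0+1)) (j+1+0) rfl rfl (κ (i-0) (j+1+0) x)
        = ((-1 : ℤ)^(1:ℕ)) • lcast (R := R) (i-(0+1)) (j+1+0) rfl rfl
                (s (i-(0+1)) j (κ (i-0) (j+0) (d i (j+1) x)))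
      rw [pow_one, neg_one_zsmul]
      rw [sub_sub_cancel_left]
    | succ kk IH =>
      intro i j h1 h2
      have hIH := IH i j (by omega) h2
      refine LinearMap.ext fun x => ?_
      have hj : j + (kk+1) = j + 1 + kk := by omega
      have hj' : j + (kk+1) + 1 = j + 1 + kk + 1 := by omega
      show lcast (R := R) (i-(kk+1+1)) (j+1+kk+1) rfl rfl
            (d (i-(kk+1+1)) (j+1+kk+1+1) (t i (j+1) (kk+1+1) x))
          - lcast (R := R) (i-(kk+1+1)) (j+1+kk+1) rfl rfl
            (κ (i-(kk+1)) (j+1+(kk+1)) (t i (j+1) (kk+1) x))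
        = ((-1 : ℤ)^(kk+1+1)) •
            lcast (R := R) (i-(kk+1+1)) (j+1+(kk+1)) rfl (by omega)
              (t i j (kk+1+1) (d i (j+1) x))
      have E : t i (j+1) (kk+1+1) x
          = s (i-(kk+1+1)) (j+1+(kk+1)) (κ (i-(kk+1)) (j+1+(kk+1)) (t i (j+1) (kk+1) x)) :=
        LinearMap.congr_fun (htsucc i (j+1) (kk+1) h1) x
      have E' : t i j (kk+1+1) (d i (j+1) x)
          = s (i-(kk+1+1)) (j+(kk+1)) (κ (i-(kk+1)) (j+(kk+1)) (t i j (kk+1) (d i (j+1) x))) :=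
        LinearMap.congr_fun (htsucc i j (kk+1) h1) (d i (j+1) x)
      rw [E, E']
      have Hm : ∀ z : X (i-(kk+1+1)) (j+1+(kk+1)),
          lcast (R := R) (i-(kk+1+1)) (j+1+kk+1) rfl rfl
              (d (i-(kk+1+1)) (j+1+kk+1+1) (s (i-(kk+1+1)) (j+1+(kk+1)) z))
            = z - lcast (R := R) (i-(kk+1+1)) (j+1+(kk+1)) rfl rfl
                (s (i-(kk+1+1)) (j+1+kk) (d (i-(kk+1+1)) (j+1+kk+1) z)) := by
        intro z
        have H := LinearMap.congr_fun (hs (i-(kk+1+1)) (by omega) (j+1+kk)) z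
        simp only [LinearMap.add_apply, LinearMap.comp_apply, LinearMap.id_apply] at H
        exact eq_sub_of_add_eq H
      rw [Hm]
      have Hy : lcast (R := R) (i-(kk+1+1)) (j+1+kk+1) rfl rfl
            (κ (i-(kk+1)) (j+1+(kk+1)) (t i (j+1) (kk+1) x))
          = κ (i-(kk+1)) (j+1+(kk+1)) (t i (j+1) (kk+1) x) := rfl
      rw [Hy]
      have Hc : κ (i-(kk+1)) (j+1+kk) (d (i-(kk+1)) (j+1+kk+1) (t i (j+1) (kk+1) x))
          = d (i-(kk+1+1)) (j+1+kk+1) (κ (i-(kk+1)) (j+1+(kk+1)) (t i (j+1) (kk+1) x)) := by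
        have h := LinearMap.congr_fun (hcomm (i-(kk+1)) (j+1+kk)) (t i (j+1) (kk+1) x)
        simp only [LinearMap.comp_apply] at h
        exact h
      rw [← Hc]
      have HI : d (i-(kk+1)) (j+1+kk+1) (t i (j+1) (kk+1) x)
          = ((-1 : ℤ)^(kk+1)) • lcast (R := R) (i-(kk+1)) (j+1+kk) rfl hj
              (t i j (kk+1) (d i (j+1) x))
            + lcast (R := R) (i-(kk+1)) (j+1+kk) rfl rfl
              (κ (i-kk) (j+1+kk) (t i (j+1) kk x)) := by
        have h := LinearMap.congr_fun hIH x
        simp only [LinearMap.sub_apply, LinearMap.comp_apply, LinearMap.smul_apply] at h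
        exact eq_add_of_sub_eq h
      rw [HI]
      have Hw : lcast (R := R) (i-(kk+1)) (j+1+kk) rfl rfl
            (κ (i-kk) (j+1+kk) (t i (j+1) kk x))
          = κ (i-kk) (j+1+kk) (t i (j+1) kk x) := rfl
      rw [Hw]
      simp only [map_add, map_zsmul]
      have HK : κ (i-(kk+1)) (j+1+kk) (κ (i-kk) (j+1+kk) (t i (j+1) kk x)) = 0 :=
        kk_zero κ hκκ (i-(kk+1)) (i-kk) (j+1+kk) (by omega) (t i (j+1) kk x)
      rw [HK]
      simp only [map_zero, add_zero]
      have SK : s (i-(kk+1+1)) (j+1+kk)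
            (κ (i-(kk+1)) (j+1+kk)
              (lcast (R := R) (i-(kk+1)) (j+1+kk) rfl hj (t i j (kk+1) (d i (j+1) x))))
          = lcast (R := R) (i-(kk+1+1)) (j+1+kk+1) rfl hj'
              (s (i-(kk+1+1)) (j+(kk+1))
                (κ (i-(kk+1)) (j+(kk+1)) (t i j (kk+1) (d i (j+1) x)))) :=
        sk_lcast s κ (i-(kk+1)) (j+1+kk) hj (t i j (kk+1) (d i (j+1) x))
      rw [SK]
      show lcast (R := R) (i-(kk+1+1)) (j+1+kk+1) rfl rfl
            (κ (i-(kk+1)) (j+1+(kk+1)) (t i (j+1) (kk+1) x))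
          - ((-1 : ℤ)^(kk+1)) • lcast (R := R) (i-(kk+1+1)) (j+1+kk+1) rfl hj'
              (s (i-(kk+1+1)) (j+(kk+1))
                (κ (i-(kk+1)) (j+(kk+1)) (t i j (kk+1) (d i (j+1) x))))
          - lcast (R := R) (i-(kk+1+1)) (j+1+kk+1) rfl rfl
            (κ (i-(kk+1)) (j+1+(kk+1)) (t i (j+1) (kk+1) x))
        = ((-1 : ℤ)^(kk+1+1)) • lcast (R := R) (i-(kk+1+1)) (j+1+kk+1) rfl hj'
              (s (i-(kk+1+1)) (j+(kk+1))
                (κ (i-(kk+1)) (j+(kk+1)) (t i j (kk+1) (d i (j+1) x))))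
      rw [sub_sub_cancel_left, pow_succ ((-1 : ℤ)) (kk+1), mul_neg_one, neg_smul]
  have key0 : ∀ kk i, kk + 1 ≤ i → i ≤ n →
      (lcast (i - (kk + 1)) (0 + kk) rfl (by omega)).comp
          ((d (i - (kk + 1)) (0 + (kk + 1))).comp
            ((lcast (i - (kk + 1)) (0 + (kk + 1)) (by omega) rfl).comp (t i 0 (kk + 1))))
        - (lcast (i - (kk + 1)) (0 + kk) (by omega) rfl).comp
            ((κ (i - kk) (0 + kk)).comp (t i 0 kk)) = 0 := by
    intro kk
    induction kk with
    | zero =>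
      intro i h1 h2
      refine LinearMap.ext fun x => ?_
      show lcast (R := R) (i-(0+1)) (0+0) rfl rfl (d (i-(0+1)) (0+0+1) (t i 0 (0+1) x))
          - lcast (R := R) (i-(0+1)) (0+0) rfl rfl (κ (i-0) (0+0) (t i 0 0 x)) = 0
      have E : t i 0 (0+1) x = s (i-(0+1)) (0+0) (κ (i-0) (0+0) x) := by
        have h := LinearMap.congr_fun (htsucc i 0 0 h1) x
        rw [ht0] at h
        exact h
      have e0 : t i 0 0 x = x := LinearMap.congr_fun (ht0 i 0) x
      rw [E, e0]
      have H : lcast (R := R) (i-(0+1)) (0+0) rfl rfl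
            (d (i-(0+1)) (0+0+1) (s (i-(0+1)) (0+0) (κ (i-0) (0+0) x)))
          = lcast (R := R) (i-(0+1)) (0+0) rfl rfl (κ (i-0) (0+0) x) := by
        have h := LinearMap.congr_fun (hs0 (i-(0+1)) (by omega)) (κ (i-0) (0+0) x)
        simp only [LinearMap.comp_apply, LinearMap.id_apply] at h
        exact h
      rw [H, sub_self]
    | succ kk IH =>
      intro i h1 h2
      have hIH := IH i (by omega) h2
      refine LinearMap.ext fun x => ?_
      show lcast (R := R) (i-(kk+1+1)) (0+kk+1) rfl rfl
            (d (i-(kk+1+1)) (0+kk+1+1) (t i 0 (kk+1+1) x))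
          - lcast (R := R) (i-(kk+1+1)) (0+kk+1) rfl rfl
            (κ (i-(kk+1)) (0+(kk+1)) (t i 0 (kk+1) x)) = 0
      have E : t i 0 (kk+1+1) x
          = s (i-(kk+1+1)) (0+(kk+1)) (κ (i-(kk+1)) (0+(kk+1)) (t i 0 (kk+1) x)) :=
        LinearMap.congr_fun (htsucc i 0 (kk+1) h1) x
      rw [E]
      have Hm : ∀ z : X (i-(kk+1+1)) (0+(kk+1)),
          lcast (R := R) (i-(kk+1+1)) (0+kk+1) rfl rfl
              (d (i-(kk+1+1)) (0+kk+1+1) (s (i-(kk+1+1)) (0+(kk+1)) z))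
            = z - lcast (R := R) (i-(kk+1+1)) (0+(kk+1)) rfl rfl
                (s (i-(kk+1+1)) (0+kk) (d (i-(kk+1+1)) (0+kk+1) z)) := by
        intro z
        have H := LinearMap.congr_fun (hs (i-(kk+1+1)) (by omega) (0+kk)) z
        simp only [LinearMap.add_apply, LinearMap.comp_apply, LinearMap.id_apply] at H
        exact eq_sub_of_add_eq H
      rw [Hm]
      have Hy : lcast (R := R) (i-(kk+1+1)) (0+kk+1) rfl rfl
            (κ (i-(kk+1)) (0+(kk+1)) (t i 0 (kk+1) x))
          = κ (i-(kk+1)) (0+(kk+1)) (t i 0 (kk+1) x) := rfl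
      rw [Hy]
      have Hc : κ (i-(kk+1)) (0+kk) (d (i-(kk+1)) (0+kk+1) (t i 0 (kk+1) x))
          = d (i-(kk+1+1)) (0+kk+1) (κ (i-(kk+1)) (0+(kk+1)) (t i 0 (kk+1) x)) := by
        have h := LinearMap.congr_fun (hcomm (i-(kk+1)) (0+kk)) (t i 0 (kk+1) x)
        simp only [LinearMap.comp_apply] at h
        exact h
      rw [← Hc]
      have HI : d (i-(kk+1)) (0+kk+1) (t i 0 (kk+1) x) = κ (i-kk) (0+kk) (t i 0 kk x) := by
        have h := LinearMap.congr_fun hIH x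
        simp only [LinearMap.sub_apply, LinearMap.comp_apply, LinearMap.zero_apply] at h
        exact sub_eq_zero.mp h
      rw [HI]
      have HK : κ (i-(kk+1)) (0+kk) (κ (i-kk) (0+kk) (t i 0 kk x)) = 0 :=
        kk_zero κ hκκ (i-(kk+1)) (i-kk) (0+kk) (by omega) (t i 0 kk x)
      rw [HK]
      simp
  exact ⟨fun i j kk h1 h2 => key1 kk i j h1 h2, fun i kk h1 h2 => key0 kk i h1 h2⟩
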